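/- Let S be an Arf numerical semigroup with multiplicity 5 and conductor s > 5 with s ≡ 2 (mod 5). Then S = ⟨5, s, s+1, s+2, s+4⟩, PF(S) = {s−5, s−4, s−3, s−1}, and the unique RF-matrix of the pseudo-Frobenius number s−5 is the 5×5 matrix with rows (−1, 1, 0, 0, 0), ((s−7)/5, −1, 0, 1, 0), ((2s−4)/5, 0, −1, 0, 0), ((s−7)/5, 0, 0, −1, 1), ((s−2)/5, 0, 1, 0, −1). -/
import Mathlib



lemma le_one' (x g B : ℤ) (hx : 0 ≤ x) (hg : 0 < g) (hB : x*g ≤ B) (h2 : B < 2*g) : x ≤ 1 := by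
  by_contra h
  push_neg at h
  have h2x : 2 * g ≤ x * g := mul_le_mul_of_nonneg_right (by linarith) hg.le
  linarith

lemma row0' (S b c d e : ℤ) (hS7 : 7 ≤ S) (hS : S % 5 = 2)
    (hb : 0 ≤ b) (hc : 0 ≤ c) (hd : 0 ≤ d) (he : 0 ≤ e)
    (h : S - 5 = (-1) * 5 + b * S + c * (S + 1) + d * (S + 2) + e * (S + 4)) :
    b = 1 ∧ c = 0 ∧ d = 0 ∧ e = 0 := by
  have pb : 0 ≤ b * S := mul_nonneg hb (by linarith)
  have pc : 0 ≤ c * (S + 1) := mul_nonneg hc (by linarith)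
  have pd : 0 ≤ d * (S + 2) := mul_nonneg hd (by linarith)
  have pe : 0 ≤ e * (S + 4) := mul_nonneg he (by linarith)
  have hb1 : b ≤ 1 := le_one' b S S hb (by linarith) (by linarith) (by linarith)
  have hc1 : c ≤ 1 := le_one' c (S+1) S hc (by linarith) (by linarith) (by linarith)
  have hd1 : d ≤ 1 := le_one' d (S+2) S hd (by linarith) (by linarith) (by linarith)
  have he1 : e ≤ 1 := le_one' e (S+4) S he (by linarith) (by linarith) (by linarith)
  interval_cases b <;> interval_cases c <;> interval_cases d <;> interval_cases e <;> omega

lemma row1' (S a c d e : ℤ) (hS7 : 7 ≤ S) (hS : S % 5 = 2)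
    (ha : 0 ≤ a) (hc : 0 ≤ c) (hd : 0 ≤ d) (he : 0 ≤ e)
    (h : S - 5 = a * 5 + (-1) * S + c * (S + 1) + d * (S + 2) + e * (S + 4)) :
    a = (S - 7) / 5 ∧ c = 0 ∧ d = 1 ∧ e = 0 := by
  have pa : 0 ≤ a * 5 := mul_nonneg ha (by norm_num)
  have pc : 0 ≤ c * (S + 1) := mul_nonneg hc (by linarith)
  have pd : 0 ≤ d * (S + 2) := mul_nonneg hd (by linarith)
  have pe : 0 ≤ e * (S + 4) := mul_nonneg he (by linarith)
  have hc1 : c ≤ 1 := le_one' c (S+1) (2*S-5) hc (by linarith) (by linarith) (by linarith)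
  have hd1 : d ≤ 1 := le_one' d (S+2) (2*S-5) hd (by linarith) (by linarith) (by linarith)
  have he1 : e ≤ 1 := le_one' e (S+4) (2*S-5) he (by linarith) (by linarith) (by linarith)
  interval_cases c <;> interval_cases d <;> interval_cases e <;> omega

lemma row2' (S a b d e : ℤ) (hS7 : 7 ≤ S) (hS : S % 5 = 2)
    (ha : 0 ≤ a) (hb : 0 ≤ b) (hd : 0 ≤ d) (he : 0 ≤ e)
    (h : S - 5 = a * 5 + b * S + (-1) * (S + 1) + d * (S + 2) + e * (S + 4)) :
    a = (2 * S - 4) / 5 ∧ b = 0 ∧ d = 0 ∧ e = 0 := by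
  have pa : 0 ≤ a * 5 := mul_nonneg ha (by norm_num)
  have pb : 0 ≤ b * S := mul_nonneg hb (by linarith)
  have pd : 0 ≤ d * (S + 2) := mul_nonneg hd (by linarith)
  have pe : 0 ≤ e * (S + 4) := mul_nonneg he (by linarith)
  have hb1 : b ≤ 1 := le_one' b S (2*S-4) hb (by linarith) (by linarith) (by linarith)
  have hd1 : d ≤ 1 := le_one' d (S+2) (2*S-4) hd (by linarith) (by linarith) (by linarith)
  have he1 : e ≤ 1 := le_one' e (S+4) (2*S-4) he (by linarith) (by linarith) (by linarith)
  interval_cases b <;> interval_cases d <;> interval_cases e <;> omega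

lemma row3' (S a b c e : ℤ) (hS7 : 7 ≤ S) (hS : S % 5 = 2)
    (ha : 0 ≤ a) (hb : 0 ≤ b) (hc : 0 ≤ c) (he : 0 ≤ e)
    (h : S - 5 = a * 5 + b * S + c * (S + 1) + (-1) * (S + 2) + e * (S + 4)) :
    a = (S - 7) / 5 ∧ b = 0 ∧ c = 0 ∧ e = 1 := by
  have pa : 0 ≤ a * 5 := mul_nonneg ha (by norm_num)
  have pb : 0 ≤ b * S := mul_nonneg hb (by linarith)
  have pc : 0 ≤ c * (S + 1) := mul_nonneg hc (by linarith)
  have pe : 0 ≤ e * (S + 4) := mul_nonneg he (by linarith)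
  have hb1 : b ≤ 1 := le_one' b S (2*S-3) hb (by linarith) (by linarith) (by linarith)
  have hc1 : c ≤ 1 := le_one' c (S+1) (2*S-3) hc (by linarith) (by linarith) (by linarith)
  have he1 : e ≤ 1 := le_one' e (S+4) (2*S-3) he (by linarith) (by linarith) (by linarith)
  interval_cases b <;> interval_cases c <;> interval_cases e <;> omega

lemma row4' (S a b c d : ℤ) (hS7 : 7 ≤ S) (hS : S % 5 = 2)
    (ha : 0 ≤ a) (hb : 0 ≤ b) (hc : 0 ≤ c) (hd : 0 ≤ d)
    (h : S - 5 = a * 5 + b * S + c * (S + 1) + d * (S + 2) + (-1) * (S + 4)) :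
    a = (S - 2) / 5 ∧ b = 0 ∧ c = 1 ∧ d = 0 := by
  have pa : 0 ≤ a * 5 := mul_nonneg ha (by norm_num)
  have pb : 0 ≤ b * S := mul_nonneg hb (by linarith)
  have pc : 0 ≤ c * (S + 1) := mul_nonneg hc (by linarith)
  have pd : 0 ≤ d * (S + 2) := mul_nonneg hd (by linarith)
  have hb1 : b ≤ 1 := le_one' b S (2*S-1) hb (by linarith) (by linarith) (by linarith)
  have hc1 : c ≤ 1 := le_one' c (S+1) (2*S-1) hc (by linarith) (by linarith) (by linarith)
  have hd1 : d ≤ 1 := le_one' d (S+2) (2*S-1) hd (by linarith) (by linarith) (by linarith)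
  interval_cases b <;> interval_cases c <;> interval_cases d <;> omega


/-- `S ⊆ ℕ` is a numerical semigroup: contains `0`, closed under addition,
and has finite complement in `ℕ`. -/
def IsNumericalSemigroup (S : Set ℕ) : Prop :=
  0 ∈ S ∧ (∀ a ∈ S, ∀ b ∈ S, a + b ∈ S) ∧ (Sᶜ).Finite

/-- `S` satisfies the Arf condition: for `x ≤ y` in `S`, `2y - x ∈ S`. -/
def IsArf (S : Set ℕ) : Prop :=
  ∀ x ∈ S, ∀ y ∈ S, x ≤ y → 2 * y - x ∈ S

/-- `m` is the multiplicity of `S`: the smallest nonzero element. -/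
def HasMultiplicity (S : Set ℕ) (m : ℕ) : Prop :=
  m ∈ S ∧ m ≠ 0 ∧ ∀ n ∈ S, n ≠ 0 → m ≤ n

/-- `s` is the conductor of `S`: the least `t` with `[t, ∞) ⊆ S`. -/
def HasConductor (S : Set ℕ) (s : ℕ) : Prop :=
  (∀ n, s ≤ n → n ∈ S) ∧ ∀ t, (∀ n, t ≤ n → n ∈ S) → s ≤ t

/-- The set of pseudo-Frobenius numbers of `S`. -/
def pseudoFrobeniusSet (S : Set ℕ) : Set ℕ :=
  {z | z ∉ S ∧ ∀ n ∈ S, n ≠ 0 → z + n ∈ S}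

/-- `A` is a row-factorization (RF-) matrix of `f` with respect to generators `n`:
diagonal entries are `-1`, off-diagonal entries are nonnegative, and every row
gives a representation of `f` in terms of the generators. -/
def IsRFMatrix {e : ℕ} (n : Fin e → ℕ) (f : ℤ) (A : Matrix (Fin e) (Fin e) ℤ) : Prop :=
  (∀ i, A i i = -1) ∧ (∀ i j, i ≠ j → 0 ≤ A i j) ∧
    (∀ i, f = ∑ j, A i j * (n j : ℤ))

lemma structure_lemma (S : Set ℕ) (s : ℕ)
    (hNS : (0:ℕ) ∈ S ∧ (∀ a ∈ S, ∀ b ∈ S, a + b ∈ S) ∧ ((Sᶜ : Set ℕ)).Finite)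
    (hArf : ∀ x ∈ S, ∀ y ∈ S, x ≤ y → 2 * y - x ∈ S)
    (hmul : (5:ℕ) ∈ S ∧ (5:ℕ) ≠ 0 ∧ ∀ n ∈ S, n ≠ 0 → 5 ≤ n)
    (hcon : (∀ n, s ≤ n → n ∈ S) ∧ ∀ t, (∀ n, t ≤ n → n ∈ S) → s ≤ t)
    (hs : 5 < s) (hmod : s % 5 = 2) :
    ∀ n, n ∈ S ↔ 5 ∣ n ∨ s ≤ n := by
  obtain ⟨h0, hadd, -⟩ := hNS
  obtain ⟨h5, -, hmin⟩ := hmul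
  obtain ⟨hc1, hc2⟩ := hcon
  have hmult5 : ∀ k : ℕ, 5 * k ∈ S := by
    intro k
    induction k with
    | zero => simpa using h0
    | succ n ih =>
        have h' : 5 * (n + 1) = 5 + 5 * n := by ring
        rw [h']; exact hadd _ h5 _ ih
  have hdvd : ∀ n : ℕ, 5 ∣ n → n ∈ S := by
    rintro n ⟨k, rfl⟩; exact hmult5 k
  have hs1 : s - 1 ∉ S := by
    intro h
    have : s ≤ s - 1 := by
      apply hc2
      intro n hn
      rcases Nat.eq_or_lt_of_le hn with h' | h'
      · rwa [← h']
      · exact hc1 n (by omega)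
    omega
  -- key: any element of S below s is a multiple of 5
  intro n
  constructor
  · intro hn
    by_contra hcon'
    push_neg at hcon'
    obtain ⟨hnd, hns⟩ := hcon'
    have hns' : n < s := by omega
    -- produce m ∈ S with m % 5 = 1 and m ≤ s - 1
    have final : ∀ m ∈ S, m % 5 = 1 → m ≤ s - 1 → False := by
      intro m hm hm5 hms
      obtain ⟨k, hk⟩ : ∃ k, s - 1 = m + 5 * k := ⟨(s - 1 - m) / 5, by omega⟩
      exact hs1 (hk ▸ hadd m hm (5 * k) (hmult5 k))
    have hn5 : 5 ≤ n := hmin n hn (by omega)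
    have hcases : n % 5 = 1 ∨ n % 5 = 2 ∨ n % 5 = 3 ∨ n % 5 = 4 := by omega
    rcases hcases with h | h | h | h
    · -- r = 1
      exact final n hn (by omega) (by omega)
    · -- r = 2 : n ≤ s - 5
      have hx : n - 2 ∈ S := hdvd _ (by omega)
      have h1 := hArf _ hx _ hn (by omega)
      rw [show 2 * n - (n - 2) = n + 2 by omega] at h1
      have h2 := hArf _ hn _ h1 (by omega)
      rw [show 2 * (n + 2) - n = n + 4 by omega] at h2
      exact final (n + 4) h2 (by omega) (by omega)
    · -- r = 3 : s - n ≥ 4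
      have hx : n - 3 ∈ S := hdvd _ (by omega)
      have h1 := hArf _ hx _ hn (by omega)
      rw [show 2 * n - (n - 3) = n + 3 by omega] at h1
      exact final (n + 3) h1 (by omega) (by omega)
    · -- r = 4 : s - n ≥ 3
      have hy : n + 1 ∈ S := hdvd _ (by omega)
      have h1 := hArf _ hn _ hy (by omega)
      rw [show 2 * (n + 1) - n = n + 2 by omega] at h1
      exact final (n + 2) h1 (by omega) (by omega)
  · rintro (h | h)
    · exact hdvd _ h
    · exact hc1 _ h

/-- Arf numerical semigroup with multiplicity `5`, conductor `s > 5`,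
`s ≡ 2 (mod 5)`: `S = ⟨5, s, s+1, s+2, s+4⟩`, `PF(S) = {s-5, s-4, s-3, s-1}`, and the
unique RF-matrix of `s-5` is as displayed. -/
theorem arf_mult_five_mod_two (S : Set ℕ) (s : ℕ)
    (hNS : IsNumericalSemigroup S) (hArf : IsArf S)
    (hmul : HasMultiplicity S 5) (hcon : HasConductor S s)
    (hs : 5 < s) (hmod : s % 5 = 2) :
    S = (AddSubmonoid.closure ({5, s, s + 1, s + 2, s + 4} : Set ℕ) : Set ℕ) ∧
    pseudoFrobeniusSet S = {s - 5, s - 4, s - 3, s - 1} ∧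
    (∀ A : Matrix (Fin 5) (Fin 5) ℤ,
      IsRFMatrix ![5, s, s + 1, s + 2, s + 4] ((s : ℤ) - 5) A ↔
        A = !![-1, 1, 0, 0, 0;
               ((s : ℤ) - 7) / 5, -1, 0, 1, 0;
               (2 * (s : ℤ) - 4) / 5, 0, -1, 0, 0;
               ((s : ℤ) - 7) / 5, 0, 0, -1, 1;
               ((s : ℤ) - 2) / 5, 0, 1, 0, -1]) := by
  have hiff := structure_lemma S s hNS hArf hmul hcon hs hmod
  have h12 : S = (AddSubmonoid.closure ({5, s, s + 1, s + 2, s + 4} : Set ℕ) : Set ℕ) ∧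
      pseudoFrobeniusSet S = {s - 5, s - 4, s - 3, s - 1} := by
    constructor
    · -- part 1
      apply Set.eq_of_subset_of_subset
      · intro n hn
        rw [hiff] at hn
        have g5 : (5:ℕ) ∈ AddSubmonoid.closure ({5, s, s + 1, s + 2, s + 4} : Set ℕ) :=
          AddSubmonoid.subset_closure (by simp)
        have gs : (s:ℕ) ∈ AddSubmonoid.closure ({5, s, s + 1, s + 2, s + 4} : Set ℕ) :=
          AddSubmonoid.subset_closure (by simp)
        have gs1 : (s+1:ℕ) ∈ AddSubmonoid.closure ({5, s, s + 1, s + 2, s + 4} : Set ℕ) :=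
          AddSubmonoid.subset_closure (by simp)
        have gs2 : (s+2:ℕ) ∈ AddSubmonoid.closure ({5, s, s + 1, s + 2, s + 4} : Set ℕ) :=
          AddSubmonoid.subset_closure (by simp)
        have gs4 : (s+4:ℕ) ∈ AddSubmonoid.closure ({5, s, s + 1, s + 2, s + 4} : Set ℕ) :=
          AddSubmonoid.subset_closure (by simp)
        have hk5 : ∀ k : ℕ, 5 * k ∈ AddSubmonoid.closure ({5, s, s + 1, s + 2, s + 4} : Set ℕ) := by
          intro k
          rw [show 5 * k = k • (5:ℕ) by simp [mul_comm]]
          exact AddSubmonoid.nsmul_mem _ g5 k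
        rcases hn with h | h
        · obtain ⟨k, rfl⟩ := h
          exact hk5 k
        · -- n ≥ s : case on n % 5
          rcases (show n % 5 = 0 ∨ n % 5 = 1 ∨ n % 5 = 2 ∨ n % 5 = 3 ∨ n % 5 = 4 by omega)
            with h5 | h5 | h5 | h5 | h5
          · obtain ⟨k, rfl⟩ : ∃ k, n = 5 * k := ⟨n / 5, by omega⟩
            exact hk5 k
          · obtain ⟨k, hk⟩ : ∃ k, n = (s + 4) + 5 * k := ⟨(n - s - 4) / 5, by omega⟩
            rw [hk]; exact AddSubmonoid.add_mem _ gs4 (hk5 k)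
          · obtain ⟨k, hk⟩ : ∃ k, n = s + 5 * k := ⟨(n - s) / 5, by omega⟩
            rw [hk]; exact AddSubmonoid.add_mem _ gs (hk5 k)
          · obtain ⟨k, hk⟩ : ∃ k, n = (s + 1) + 5 * k := ⟨(n - s - 1) / 5, by omega⟩
            rw [hk]; exact AddSubmonoid.add_mem _ gs1 (hk5 k)
          · obtain ⟨k, hk⟩ : ∃ k, n = (s + 2) + 5 * k := ⟨(n - s - 2) / 5, by omega⟩
            rw [hk]; exact AddSubmonoid.add_mem _ gs2 (hk5 k)
      · -- closure ⊆ S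
        have : AddSubmonoid.closure ({5, s, s + 1, s + 2, s + 4} : Set ℕ) ≤
            { carrier := S, zero_mem' := hNS.1, add_mem' := fun {a b} ha hb => hNS.2.1 a ha b hb } := by
          rw [AddSubmonoid.closure_le]
          intro x hx
          simp only [Set.mem_insert_iff, Set.mem_singleton_iff] at hx
          rcases hx with rfl | rfl | rfl | rfl | rfl <;> exact (hiff _).mpr (by omega)
        exact fun n hn => this hn
    · -- part 2
      ext z
      simp only [pseudoFrobeniusSet, Set.mem_setOf_eq, Set.mem_insert_iff, Set.mem_singleton_iff]
      constructor
      · rintro ⟨hzS, hz⟩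
        rw [hiff] at hzS
        push_neg at hzS
        have h5 := hz 5 (by rw [hiff]; omega) (by omega)
        rw [hiff] at h5
        omega
      · intro hz
        constructor
        · rw [hiff]; omega
        · intro n hn hn0
          rw [hiff] at hn ⊢
          omega
  refine ⟨h12.1, h12.2, ?_⟩
  have hS7 : (7:ℤ) ≤ (s:ℤ) := by omega
  have hSmod : (s:ℤ) % 5 = 2 := by omega
  intro A
  constructor
  · rintro ⟨hdiag, hpos, hrow⟩
    have hr0 := hrow 0
    have hr1 := hrow 1
    have hr2 := hrow 2
    have hr3 := hrow 3
    have hr4 := hrow 4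
    simp only [Fin.sum_univ_five, Matrix.cons_val_zero, Matrix.cons_val_one, Matrix.head_cons,
      Matrix.cons_val_two, Matrix.tail_cons, Matrix.cons_val_three, Matrix.cons_val_four,
      Nat.cast_ofNat, Nat.cast_add, Nat.cast_one] at hr0 hr1 hr2 hr3 hr4
    rw [hdiag 0] at hr0
    rw [hdiag 1] at hr1
    rw [hdiag 2] at hr2
    rw [hdiag 3] at hr3
    rw [hdiag 4] at hr4
    push_cast at hr0 hr1 hr2 hr3 hr4
    have H0 := row0' (s:ℤ) (A 0 1) (A 0 2) (A 0 3) (A 0 4) hS7 hSmod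
      (hpos 0 1 (by decide)) (hpos 0 2 (by decide)) (hpos 0 3 (by decide)) (hpos 0 4 (by decide))
      (by linarith)
    have H1 := row1' (s:ℤ) (A 1 0) (A 1 2) (A 1 3) (A 1 4) hS7 hSmod
      (hpos 1 0 (by decide)) (hpos 1 2 (by decide)) (hpos 1 3 (by decide)) (hpos 1 4 (by decide))
      (by linarith)
    have H2 := row2' (s:ℤ) (A 2 0) (A 2 1) (A 2 3) (A 2 4) hS7 hSmod
      (hpos 2 0 (by decide)) (hpos 2 1 (by decide)) (hpos 2 3 (by decide)) (hpos 2 4 (by decide))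
      (by linarith)
    have H3 := row3' (s:ℤ) (A 3 0) (A 3 1) (A 3 2) (A 3 4) hS7 hSmod
      (hpos 3 0 (by decide)) (hpos 3 1 (by decide)) (hpos 3 2 (by decide)) (hpos 3 4 (by decide))
      (by linarith)
    have H4 := row4' (s:ℤ) (A 4 0) (A 4 1) (A 4 2) (A 4 3) hS7 hSmod
      (hpos 4 0 (by decide)) (hpos 4 1 (by decide)) (hpos 4 2 (by decide)) (hpos 4 3 (by decide))
      (by linarith)
    ext i j
    fin_cases i <;> fin_cases j <;> simp <;>
      first
        | exact hdiag _
        | exact H0.1 | exact H0.2.1 | exact H0.2.2.1 | exact H0.2.2.2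
        | exact H1.1 | exact H1.2.1 | exact H1.2.2.1 | exact H1.2.2.2
        | exact H2.1 | exact H2.2.1 | exact H2.2.2.1 | exact H2.2.2.2
        | exact H3.1 | exact H3.2.1 | exact H3.2.2.1 | exact H3.2.2.2
        | exact H4.1 | exact H4.2.1 | exact H4.2.2.1 | exact H4.2.2.2
  · rintro rfl
    refine ⟨?_, ?_, ?_⟩
    · intro i; fin_cases i <;> simp
    · intro i j hij
      fin_cases i <;> fin_cases j <;>
        first
          | exact absurd rfl hij
          | (simp [Matrix.vecHead, Matrix.vecTail] <;> omega)
    · intro i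
      fin_cases i <;>
        simp [Fin.sum_univ_five] <;> push_cast <;> omega
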